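/- arXiv:1502.00482 — 5 statements merged into one kernel-verified Lean document; each statement's English description precedes it below -/
import Mathlib

section
/- Let (X,d) be a compact metric space and T : X → X a continuous map. Suppose T has a fixed point and there exists N ∈ ℕ such that for every pair of points x, y ∈ X there exists an integer i with 0 ≤ i ≤ N−1 and T^i(x) = T^i(y). Then T has the almost specification property; in fact it has the almost specification property with the constant mistake function g(n,ε) ≡ N and with constants k_g(ε) ≡ N. -/
open Filter Set

/-- A *mistake function* (with threshold `ε₀`): `g n ε` is nondecreasing in `n`,
`g n ε / n → 0`, and `g n ε = g n ε₀` for `ε ≥ ε₀`. -/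
def IsMistakeFunction (ε₀ : ℝ) (g : ℕ → ℝ → ℕ) : Prop :=
  0 < ε₀ ∧
  (∀ ε : ℝ, 0 < ε → ε < ε₀ → ∀ n : ℕ, g n ε ≤ g (n + 1) ε) ∧
  (∀ ε : ℝ, 0 < ε → ε < ε₀ →
    Filter.Tendsto (fun n : ℕ => (g n ε : ℝ) / n) Filter.atTop (nhds 0)) ∧
  (∀ ε : ℝ, ε₀ ≤ ε → ∀ n : ℕ, g n ε = g n ε₀)

/-- The `(g; n, ε)` Bowen ball `B_n(g; x, ε)`: points `y` that `ε`-trace the orbit of `x`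
along some `Λ ⊆ {0, …, n-1}` with `#Λ ≥ n - g(n,ε)`. -/
def mistakeBall {X : Type*} [MetricSpace X] (T : X → X) (g : ℕ → ℝ → ℕ)
    (n : ℕ) (x : X) (ε : ℝ) : Set X :=
  {y | ∃ Λ : Finset ℕ, Λ ⊆ Finset.range n ∧ n - g n ε ≤ Λ.card ∧
    ∀ j ∈ Λ, dist (T^[j] x) (T^[j] y) < ε}

/-- `T` has the almost specification property with mistake function `g` and constants `kg`. -/
def AlmostSpecWith {X : Type*} [MetricSpace X] (T : X → X) (g : ℕ → ℝ → ℕ)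
    (kg : ℝ → ℕ) : Prop :=
  ∀ m : ℕ, ∀ eps : Fin m → ℝ, (∀ j, 0 < eps j) →
    ∀ xs : Fin m → X, ∀ ns : Fin m → ℕ, (∀ j, kg (eps j) ≤ ns j) →
      ∃ z : X, ∀ j : Fin m,
        T^[∑ s ∈ Finset.Iio j, ns s] z ∈ mistakeBall T g (ns j) (xs j) (eps j)

/-- `T` has the almost specification property (for some mistake function). -/
def HasAlmostSpec {X : Type*} [MetricSpace X] (T : X → X) : Prop :=
  ∃ (ε₀ : ℝ) (g : ℕ → ℝ → ℕ), IsMistakeFunction ε₀ g ∧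
    ∃ kg : ℝ → ℕ, AlmostSpecWith T g kg

/-- `s_n(X, ε)`: the maximal cardinality of an `(n, ε)`-separated subset of `X`. -/
noncomputable def sepNum {X : Type*} [MetricSpace X] (T : X → X) (n : ℕ) (ε : ℝ) : ℕ :=
  sSup {k : ℕ | ∃ F : Finset X,
    (∀ x ∈ F, ∀ y ∈ F, x ≠ y → ∃ j < n, ε < dist (T^[j] x) (T^[j] y)) ∧ F.card = k}

/-- `s_n(g; X, ε)`: the maximal cardinality of a `(g; n, ε)`-separated subset of `X`. -/
noncomputable def sepNumG {X : Type*} [MetricSpace X] (T : X → X) (g : ℕ → ℝ → ℕ)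
    (n : ℕ) (ε : ℝ) : ℕ :=
  sSup {k : ℕ | ∃ F : Finset X,
    (∀ x ∈ F, ∀ y ∈ F, x ≠ y →
      g n ε < Set.ncard {j : ℕ | j < n ∧ ε < dist (T^[j] x) (T^[j] y)}) ∧ F.card = k}

/-- Topological entropy `h_top(T) = lim_{ε→0} limsup_n (1/n) log s_n(X,ε)`; since the
inner quantity is nonincreasing in `ε`, the limit as `ε → 0⁺` is the supremum over `ε > 0`. -/
noncomputable def topEntropy {X : Type*} [MetricSpace X] (T : X → X) : EReal :=
  ⨆ ε : {e : ℝ // 0 < e}, Filter.atTop.limsup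
    (fun n : ℕ => ((Real.log (sepNum T n ε.1) / n : ℝ) : EReal))

/-- if `T` has a fixed point and all orbits collide within `N` steps, then `T`
has the almost specification property, in fact with constant mistake function `g ≡ N`
and constants `k_g ≡ N`. -/
theorem fixed_point_collision_almostSpec {X : Type*} [MetricSpace X] [CompactSpace X]
    (T : X → X) (hT : Continuous T) (hfix : ∃ z : X, T z = z) (N : ℕ)
    (hN : ∀ x y : X, ∃ i < N, T^[i] x = T^[i] y) :
    HasAlmostSpec T ∧ AlmostSpecWith T (fun _ _ => N) (fun _ => N) := by
  obtain ⟨z₀, hz₀⟩ := hfix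
  have hiter : ∀ m : ℕ, T^[m] z₀ = z₀ := fun m => Function.iterate_fixed hz₀ m
  have hspec : AlmostSpecWith T (fun _ _ => N) (fun _ => N) := by
    intro m eps heps xs ns hns
    refine ⟨z₀, fun j => ?_⟩
    obtain ⟨i, hiN, hix⟩ := hN (xs j) z₀
    rw [hiter i] at hix
    refine ⟨Finset.Ico i (ns j), ?_, ?_, ?_⟩
    · intro k hk
      simp only [Finset.mem_Ico] at hk
      exact Finset.mem_range.mpr hk.2
    · rw [Nat.card_Ico]
      exact Nat.sub_le_sub_left hiN.le (ns j)
    · intro k hk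
      simp only [Finset.mem_Ico] at hk
      have h1 : T^[k] (xs j) = z₀ := by
        have : k = (k - i) + i := (Nat.sub_add_cancel hk.1).symm
        rw [this, Function.iterate_add_apply, hix, hiter]
      have h2 : T^[k] (T^[∑ s ∈ Finset.Iio j, ns s] z₀) = z₀ := by
        rw [hiter, hiter]
      rw [h1, h2, dist_self]
      exact heps j
  refine ⟨⟨1, fun _ _ => N, ⟨one_pos, fun _ _ _ _ => le_refl N, fun ε _ _ => ?_,
    fun _ _ _ => rfl⟩, fun _ => N, hspec⟩, hspec⟩
  exact tendsto_const_div_atTop_nhds_zero_nat (N : ℝ)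
end

section
/- Let (X,d) be a compact metric space and T : X → X a continuous map. Suppose T has a fixed point and there exists N ∈ ℕ such that for every pair of points x, y ∈ X there exists an integer i with 0 ≤ i ≤ N−1 and T^i(x) = T^i(y). Then for every ε > 0 and every n ≥ N one has s_n(X,ε) = s_N(X,ε). -/
open Filter Set

/-- if `T` has a fixed point and all orbits collide within `N` steps, then
`s_n(X, ε) = s_N(X, ε)` for every `ε > 0` and every `n ≥ N`. -/
theorem sepNum_stabilizes {X : Type*} [MetricSpace X] [CompactSpace X]
    (T : X → X) (hT : Continuous T) (hfix : ∃ z : X, T z = z) (N : ℕ)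
    (hN : ∀ x y : X, ∃ i < N, T^[i] x = T^[i] y) :
    ∀ ε : ℝ, 0 < ε → ∀ n : ℕ, N ≤ n → sepNum T n ε = sepNum T N ε := by
  intro ε hε n hn
  unfold sepNum
  congr 1
  ext k
  constructor
  · rintro ⟨F, hF, hcard⟩
    refine ⟨F, fun x hx y hy hxy => ?_, hcard⟩
    obtain ⟨j, hj, hd⟩ := hF x hx y hy hxy
    obtain ⟨i, hi, heq⟩ := hN x y
    by_cases h : j < i
    · exact ⟨j, h.trans hi, hd⟩
    · exfalso
      have : T^[j] x = T^[j] y := by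
        have : j = (j - i) + i := (Nat.sub_add_cancel (le_of_not_gt h)).symm
        rw [this, Function.iterate_add_apply, Function.iterate_add_apply, heq]
      rw [this] at hd
      simp at hd
      linarith
  · rintro ⟨F, hF, hcard⟩
    refine ⟨F, fun x hx y hy hxy => ?_, hcard⟩
    obtain ⟨j, hj, hd⟩ := hF x hx y hy hxy
    exact ⟨j, hj.trans_le hn, hd⟩
end

section
/- Let (X,d) be a compact metric space and T : X → X a continuous map satisfying the almost specification property with mistake function g (with constants k_g), where moreover g(n,ε) is nondecreasing in ε. Suppose there exist real numbers σ > 2δ > 0, an integer N ∈ ℕ with N ≥ k_g(δ), and points x, y ∈ X that are (2g; N, σ)-separated, i.e. #{j : 0 ≤ j ≤ N−1, d(T^j x, T^j y) > σ} > 2g(N,σ). Then h_top(T) ≥ (log 2)/N; in particular h_top(T) > 0. -/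
open Filter Set

section Aux

variable {X : Type*} [MetricSpace X] [CompactSpace X]

/-- In a compact metric space, the set of cardinalities of `(n,ε)`-separated sets is
bounded above. -/
lemma sepSet_bddAbove (T : X → X) (n : ℕ) {ε : ℝ} (hε : 0 < ε) :
    BddAbove {k : ℕ | ∃ F : Finset X,
      (∀ x ∈ F, ∀ y ∈ F, x ≠ y → ∃ j < n, ε < dist (T^[j] x) (T^[j] y)) ∧ F.card = k} := by
  classical
  obtain ⟨t, ht, hcover⟩ := (Metric.totallyBounded_iff.1
    (isCompact_univ (X := Fin n → X)).totallyBounded) (ε/2) (by linarith)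
  refine ⟨ht.toFinset.card, ?_⟩
  rintro k ⟨F, hF, rfl⟩
  set Φ : X → (Fin n → X) := fun a i => T^[i.1] a with hΦ
  have key : ∀ a : X, ∃ c, c ∈ ht.toFinset ∧ Φ a ∈ Metric.ball c (ε/2) := by
    intro a
    have := hcover (Set.mem_univ (Φ a))
    simp only [Set.mem_iUnion] at this
    obtain ⟨c, hc, h⟩ := this
    exact ⟨c, ht.mem_toFinset.2 hc, h⟩
  choose f hf1 hf2 using key
  refine Finset.card_le_card_of_injOn f (fun a _ => hf1 a) ?_
  intro a ha b hb hab
  by_contra hne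
  obtain ⟨j, hj, hjd⟩ := hF a ha b hb hne
  have h1 : dist (Φ a ⟨j, hj⟩) (Φ b ⟨j, hj⟩) ≤ dist (Φ a) (Φ b) := dist_le_pi_dist _ _ _
  have h2 : dist (Φ a) (Φ b) ≤ dist (f b) (Φ a) + dist (f b) (Φ b) :=
    dist_triangle_left _ _ _
  have h3 : dist (f b) (Φ a) < ε / 2 := by
    rw [← hab, dist_comm]; exact Metric.mem_ball.1 (hf2 a)
  have h4 : dist (f b) (Φ b) < ε / 2 := by
    have := Metric.mem_ball.1 (hf2 b); rwa [dist_comm] at this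
  simp only [hΦ] at h1
  linarith

end Aux

/-- if `T` has almost specification with mistake function `g` (nondecreasing
in `ε`) and there are `σ > 2δ > 0`, `N ≥ k_g(δ)` and `(2g; N, σ)`-separated points `x, y`,
then `h_top(T) ≥ (log 2) / N > 0`. -/
theorem entropy_positive_of_separated {X : Type*} [MetricSpace X] [CompactSpace X]
    (T : X → X) (hT : Continuous T) (ε₀ : ℝ) (g : ℕ → ℝ → ℕ)
    (hg : IsMistakeFunction ε₀ g)
    (hmono : ∀ n : ℕ, ∀ ε ε' : ℝ, 0 < ε → ε ≤ ε' → g n ε ≤ g n ε')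
    (kg : ℝ → ℕ) (hspec : AlmostSpecWith T g kg)
    (σ δ : ℝ) (hδ : 0 < δ) (hσ : 2 * δ < σ)
    (N : ℕ) (hNk : kg δ ≤ N) (x y : X)
    (hsep : 2 * g N σ < Set.ncard {j : ℕ | j < N ∧ σ < dist (T^[j] x) (T^[j] y)}) :
    ((Real.log 2 / N : ℝ) : EReal) ≤ topEntropy T ∧ 0 < topEntropy T := by
  classical
  -- basic facts
  have hδσ : δ ≤ σ := by linarith
  have hgδσ : g N δ ≤ g N σ := hmono N δ σ hδ hδσ
  set ε : ℝ := σ - 2 * δ with hεdef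
  have hεpos : 0 < ε := by simp only [hεdef]; linarith
  -- the separation set as a Finset
  set SF : Finset ℕ := (Finset.range N).filter
    (fun i => σ < dist (T^[i] x) (T^[i] y)) with hSFdef
  have hSF : 2 * g N σ < SF.card := by
    have hset : {j : ℕ | j < N ∧ σ < dist (T^[j] x) (T^[j] y)} = ↑SF := by
      ext j; simp [hSFdef]
    rwa [hset, Set.ncard_coe_finset] at hsep
  have hSFsub : SF ⊆ Finset.range N := Finset.filter_subset _ _
  have hN1 : 1 ≤ N := by
    rcases Finset.card_pos.1 (by omega : 0 < SF.card) with ⟨j, hj⟩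
    have := hSFsub hj
    simp only [Finset.mem_range] at this
    omega
  -- key: for every m, sepNum T (m*N) ε ≥ 2^m
  have hkey : ∀ m : ℕ, (2 : ℕ) ^ m ≤ sepNum T (m * N) ε := by
    intro m
    set p : Bool → X := fun b => if b then x else y with hp
    have hz : ∀ w : Fin m → Bool, ∃ z : X, ∀ j : Fin m,
        T^[∑ s ∈ Finset.Iio j, N] z ∈ mistakeBall T g N (p (w j)) δ :=
      fun w => hspec m (fun _ => δ) (fun _ => hδ) (fun j => p (w j)) (fun _ => N)
        (fun _ => hNk)
    choose z hz using hz
    -- separation of the tracing points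
    have hclaim : ∀ w w' : Fin m → Bool, w ≠ w' →
        ∃ j < m * N, ε < dist (T^[j] (z w)) (T^[j] (z w')) := by
      intro w w' hww
      obtain ⟨j₀, hj₀⟩ := Function.ne_iff.1 hww
      have hsum : ∑ s ∈ Finset.Iio j₀, N = (j₀ : ℕ) * N := by
        rw [Finset.sum_const, Fin.card_Iio, smul_eq_mul]
      obtain ⟨Λ, hΛsub, hΛcard, hΛ⟩ := hz w j₀
      obtain ⟨Λ', hΛ'sub, hΛ'card, hΛ'⟩ := hz w' j₀
      rw [hsum] at hΛ hΛ'
      -- counting: SF ∩ Λ ∩ Λ' is nonempty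
      have hc1 : (SF \ Λ).card ≤ g N δ := by
        have h1 : SF \ Λ ⊆ Finset.range N \ Λ :=
          Finset.sdiff_subset_sdiff hSFsub (le_refl _)
        have h2 := Finset.card_le_card h1
        rw [Finset.card_sdiff_of_subset hΛsub, Finset.card_range] at h2
        have h3 : Λ.card ≤ N := by
          simpa using Finset.card_le_card hΛsub
        omega
      have hc1' : (SF \ Λ').card ≤ g N δ := by
        have h1 : SF \ Λ' ⊆ Finset.range N \ Λ' :=
          Finset.sdiff_subset_sdiff hSFsub (le_refl _)
        have h2 := Finset.card_le_card h1
        rw [Finset.card_sdiff_of_subset hΛ'sub, Finset.card_range] at h2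
        have h3 : Λ'.card ≤ N := by
          simpa using Finset.card_le_card hΛ'sub
        omega
      have hcover : SF ⊆ (SF ∩ Λ ∩ Λ') ∪ ((SF \ Λ) ∪ (SF \ Λ')) := by
        intro i hi
        by_cases h1 : i ∈ Λ
        · by_cases h2 : i ∈ Λ'
          · exact Finset.mem_union_left _ (by simp [hi, h1, h2])
          · exact Finset.mem_union_right _ (by simp [hi, h2])
        · exact Finset.mem_union_right _ (by simp [hi, h1])
      have hcard : SF.card ≤ (SF ∩ Λ ∩ Λ').card + ((SF \ Λ).card + (SF \ Λ').card) := by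
        calc SF.card ≤ ((SF ∩ Λ ∩ Λ') ∪ ((SF \ Λ) ∪ (SF \ Λ'))).card :=
              Finset.card_le_card hcover
          _ ≤ (SF ∩ Λ ∩ Λ').card + ((SF \ Λ) ∪ (SF \ Λ')).card := Finset.card_union_le _ _
          _ ≤ (SF ∩ Λ ∩ Λ').card + ((SF \ Λ).card + (SF \ Λ').card) := by
              exact Nat.add_le_add_left (Finset.card_union_le _ _) _
      have hne : 0 < (SF ∩ Λ ∩ Λ').card := by omega
      obtain ⟨i, hi⟩ := Finset.card_pos.1 hne
      simp only [Finset.mem_inter] at hi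
      obtain ⟨⟨hiSF, hiΛ⟩, hiΛ'⟩ := hi
      have hiN : i < N := Finset.mem_range.1 (hSFsub hiSF)
      have hiσ : σ < dist (T^[i] x) (T^[i] y) := by
        simp only [hSFdef, Finset.mem_filter] at hiSF
        exact hiSF.2
      -- distances from tracing
      have hA : dist (T^[i] (p (w j₀))) (T^[i] (T^[(j₀ : ℕ) * N] (z w))) < δ := hΛ i hiΛ
      have hB : dist (T^[i] (p (w' j₀))) (T^[i] (T^[(j₀ : ℕ) * N] (z w'))) < δ := hΛ' i hiΛ'
      have hpx : p true = x := rfl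
      have hpy : p false = y := rfl
      have hσi : σ < dist (T^[i] (p (w j₀))) (T^[i] (p (w' j₀))) := by
        cases hb : w j₀ <;> cases hb' : w' j₀
        · exact absurd (hb.trans hb'.symm) hj₀
        · rw [hpx, hpy]; rwa [dist_comm] at hiσ
        · rw [hpx, hpy]; exact hiσ
        · exact absurd (hb.trans hb'.symm) hj₀
      refine ⟨i + (j₀ : ℕ) * N, ?_, ?_⟩
      · have : (j₀ : ℕ) + 1 ≤ m := j₀.2
        calc i + (j₀ : ℕ) * N < N + (j₀ : ℕ) * N := by omega
          _ = ((j₀ : ℕ) + 1) * N := by ring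
          _ ≤ m * N := Nat.mul_le_mul_right _ this
      · have hiter : ∀ u : X, T^[i + (j₀ : ℕ) * N] u = T^[i] (T^[(j₀ : ℕ) * N] u) :=
          fun u => Function.iterate_add_apply T i ((j₀ : ℕ) * N) u
        rw [hiter, hiter]
        have htri := dist_triangle4 (T^[i] (p (w j₀))) (T^[i] (T^[(j₀ : ℕ) * N] (z w)))
          (T^[i] (T^[(j₀ : ℕ) * N] (z w'))) (T^[i] (p (w' j₀)))
        have hB' : dist (T^[i] (T^[(j₀ : ℕ) * N] (z w'))) (T^[i] (p (w' j₀))) < δ := by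
          rwa [dist_comm] at hB
        simp only [hεdef]
        linarith
    -- the finite separated set
    set F : Finset X := Finset.image z Finset.univ with hF
    have hzinj : Function.Injective z := by
      intro w w' h
      by_contra hne
      obtain ⟨j, _, hjd⟩ := hclaim w w' hne
      rw [h] at hjd
      simp at hjd
      linarith
    have hFcard : F.card = 2 ^ m := by
      rw [hF, Finset.card_image_of_injective _ hzinj, Finset.card_univ]
      simp
    have hmem : (2 : ℕ) ^ m ∈ {k : ℕ | ∃ F : Finset X,
        (∀ x ∈ F, ∀ y ∈ F, x ≠ y → ∃ j < m * N, ε < dist (T^[j] x) (T^[j] y)) ∧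
        F.card = k} := by
      refine ⟨F, ?_, hFcard⟩
      intro a ha b hb hab
      simp only [hF, Finset.mem_image, Finset.mem_univ, true_and] at ha hb
      obtain ⟨w, rfl⟩ := ha
      obtain ⟨w', rfl⟩ := hb
      exact hclaim w w' (fun h => hab (by rw [h]))
    exact le_csSup (sepSet_bddAbove T (m * N) hεpos) hmem
  -- entropy estimate
  have hmain : ((Real.log 2 / N : ℝ) : EReal) ≤ topEntropy T := by
    have hlim : ((Real.log 2 / N : ℝ) : EReal) ≤ Filter.atTop.limsup
        (fun n : ℕ => ((Real.log (sepNum T n ε) / n : ℝ) : EReal)) := by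
      refine Filter.le_limsup_of_frequently_le ?_
        ⟨⊤, Filter.Eventually.of_forall fun _ => le_top⟩
      rw [Filter.frequently_atTop]
      intro n₀
      refine ⟨(max n₀ 1) * N, ?_, ?_⟩
      · calc n₀ ≤ max n₀ 1 := le_max_left _ _
          _ = (max n₀ 1) * 1 := (mul_one _).symm
          _ ≤ (max n₀ 1) * N := Nat.mul_le_mul_left _ hN1
      · set m := max n₀ 1 with hm
        have hm1 : 1 ≤ m := le_max_right _ _
        have hmN : 0 < m * N := by positivity
        have hs := hkey m
        have hslog : (m : ℝ) * Real.log 2 ≤ Real.log (sepNum T (m * N) ε) := by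
          have h2 : (2 : ℝ) ^ m ≤ (sepNum T (m * N) ε : ℝ) := by exact_mod_cast hs
          have := Real.log_le_log (by positivity) h2
          rwa [Real.log_pow] at this
        have hreal : Real.log 2 / N ≤ Real.log (sepNum T (m * N) ε) / (m * N : ℕ) := by
          rw [Nat.cast_mul]
          have hNpos : (0 : ℝ) < N := by exact_mod_cast hN1
          have hmpos : (0 : ℝ) < m := by exact_mod_cast hm1
          rw [div_le_div_iff₀ hNpos (by positivity)]
          calc Real.log 2 * ((m : ℝ) * N) = ((m : ℝ) * Real.log 2) * N := by ring
            _ ≤ Real.log (sepNum T (m * N) ε) * N := by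
                apply mul_le_mul_of_nonneg_right hslog (le_of_lt hNpos)
        exact_mod_cast hreal
    calc ((Real.log 2 / N : ℝ) : EReal) ≤ _ := hlim
      _ ≤ topEntropy T := le_iSup (fun e : {e : ℝ // 0 < e} => Filter.atTop.limsup
          (fun n : ℕ => ((Real.log (sepNum T n e.1) / n : ℝ) : EReal))) ⟨ε, hεpos⟩
  refine ⟨hmain, lt_of_lt_of_le ?_ hmain⟩
  have : (0 : ℝ) < Real.log 2 / N := by
    apply div_pos (Real.log_pos (by norm_num))
    exact_mod_cast hN1
  exact_mod_cast this
end

section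
/- Let (X,d) be a compact metric space and T : X → X a continuous map satisfying the almost specification property with mistake function g (with constants k_g). If h_top(T) > 0, then there exist real numbers σ > 2δ > 0, an integer N ∈ ℕ with N ≥ k_g(δ), and points x, y ∈ X that are (2g; N, σ)-separated, i.e. #{j : 0 ≤ j ≤ N−1, d(T^j x, T^j y) > σ} > 2g(N,σ). -/
open Filter Set

open Real Nat
lemma aux_log_factorial : ∀ K : ℕ, (K:ℝ) * Real.log K ≤ Real.log (K !) + K := by
  intro K
  induction K with
  | zero => simp
  | succ K ih =>
    rcases Nat.eq_zero_or_pos K with rfl | hK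
    · simp
    have hK0 : (0:ℝ) < K := by exact_mod_cast hK
    have hstep : Real.log ((K:ℝ)+1) ≤ Real.log K + 1/K := by
      have h := Real.log_le_sub_one_of_pos (x := ((K:ℝ)+1)/K) (by positivity)
      rw [Real.log_div (by positivity) (ne_of_gt hK0)] at h
      have : ((K:ℝ)+1)/K - 1 = 1/K := by field_simp; ring
      linarith [this ▸ h]
    have hfact : Real.log ((K+1)! : ℕ) = Real.log ((K:ℝ)+1) + Real.log (K !) := by
      rw [Nat.factorial_succ]
      push_cast
      rw [Real.log_mul (by positivity) (by positivity)]
    have h2 : ((K:ℕ):ℝ) + 1 = ((K+1:ℕ):ℝ) := by push_cast; ring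
    have hm : (K:ℝ) * Real.log ((K:ℝ)+1) ≤ (K:ℝ)*Real.log K + 1 := by
      have h3 := mul_le_mul_of_nonneg_left hstep (le_of_lt hK0)
      have h4 : (K:ℝ) * (Real.log K + 1/K) = (K:ℝ)*Real.log K + 1 := by
        field_simp
      linarith [h4 ▸ h3]
    push_cast
    rw [hfact]
    push_cast
    nlinarith [hm, ih]

lemma aux_pow_fact (n i : ℕ) : ∀ K, i ≤ K → K ≤ n → n ^ i * K ! ≤ n ^ K * i ! := by
  intro K
  induction K with
  | zero => intro h1 _; interval_cases i; simp
  | succ K ih =>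
    intro h1 h2
    rcases Nat.lt_or_ge i (K+1) with h | h
    · have hiK : i ≤ K := Nat.lt_succ_iff.mp h
      calc n^i * (K+1)! = (K+1) * (n^i * K !) := by rw [Nat.factorial_succ]; ring
        _ ≤ (K+1) * (n^K * i !) := Nat.mul_le_mul_left _ (ih hiK (le_trans (Nat.le_succ K) h2))
        _ ≤ n * (n^K * i !) := Nat.mul_le_mul_right _ h2
        _ = n^(K+1) * i ! := by rw [pow_succ]; ring
    · have : i = K+1 := le_antisymm h1 h
      subst this; exact le_refl _

lemma aux_choose_le (n i K : ℕ) (h1 : i ≤ K) (h2 : K ≤ n) :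
    (n.choose i : ℝ) ≤ (n:ℝ)^K / K ! := by
  have hbase := Nat.choose_le_pow_div (α := ℝ) i n
  have hK : (0:ℝ) < (K ! : ℕ) := by exact_mod_cast Nat.factorial_pos K
  have hi : (0:ℝ) < (i ! : ℕ) := by exact_mod_cast Nat.factorial_pos i
  have hmono : (n:ℝ)^i / i ! ≤ (n:ℝ)^K / K ! := by
    rw [div_le_div_iff₀ hi hK]
    have := aux_pow_fact n i K h1 h2
    exact_mod_cast this
  refine le_trans ?_ hmono
  exact_mod_cast hbase

lemma aux_negMulLog (k nn : ℝ) (hk : 0 ≤ k) (hn : 0 < nn) :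
    k * Real.log nn - k * Real.log k = nn * Real.negMulLog (k / nn) := by
  rcases eq_or_lt_of_le hk with rfl | hk0
  · simp
  · rw [Real.negMulLog, Real.log_div (ne_of_gt hk0) (ne_of_gt hn)]
    field_simp
    ring

lemma count_lemma {X : Type*} [MetricSpace X] (T : X → X) (n K : ℕ) (σ : ℝ) (hσ : 0 < σ)
    (P : Finset X) (np : X → X) (hmem : ∀ x, np x ∈ P) (hdist : ∀ x, dist x (np x) < σ)
    (F : Finset X)
    (hsep : ∀ x ∈ F, ∀ y ∈ F, x ≠ y → ∃ j < n, 3*σ < dist (T^[j] x) (T^[j] y))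
    (hns : ∀ x y : X, ({j : ℕ | j < n ∧ σ < dist (T^[j] x) (T^[j] y)}).ncard ≤ K)
    (hKn : K ≤ n) :
    (F.card : ℝ) ≤ (K+1) * ((n:ℝ)^K / K !) * (P.card : ℝ)^K := by
  classical
  rcases F.eq_empty_or_nonempty with rfl | ⟨x₀, hx₀⟩
  · simp only [Finset.card_empty, Nat.cast_zero]
    have h1 : (0:ℝ) < (K ! : ℕ) := by exact_mod_cast Nat.factorial_pos K
    positivity
  set Λ : X → Finset ℕ := fun y => (Finset.range n).filter
    (fun j => σ < dist (T^[j] x₀) (T^[j] y)) with hΛ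
  have hΛcard : ∀ y, (Λ y).card ≤ K := by
    intro y
    have hset : {j : ℕ | j < n ∧ σ < dist (T^[j] x₀) (T^[j] y)} = ↑(Λ y) := by
      ext j; simp [hΛ, Finset.mem_filter, Finset.mem_range]
    have := hns x₀ y
    rwa [hset, Set.ncard_coe_finset] at this
  set 𝒮 : Finset (Finset ℕ) := (Finset.range n).powerset.filter (fun S => S.card ≤ K) with h𝒮
  have hmaps : ∀ y ∈ F, Λ y ∈ 𝒮 := by
    intro y _
    simp only [h𝒮, Finset.mem_filter, Finset.mem_powerset]
    exact ⟨Finset.filter_subset _ _, hΛcard y⟩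
  have hfiber : ∀ S ∈ 𝒮, (F.filter (fun y => Λ y = S)).card ≤ P.card ^ K := by
    intro S hS
    have hScard : S.card ≤ K := (Finset.mem_filter.mp hS).2
    have hP1 : 1 ≤ P.card := Finset.card_pos.mpr ⟨np x₀, hmem x₀⟩
    set phi : X → ({j // j ∈ S} → {x // x ∈ P}) :=
      fun y => fun j => ⟨np (T^[j.1] y), hmem _⟩ with hphi
    have hinj : Set.InjOn phi (F.filter (fun y => Λ y = S)) := by
      intro y hy y' hy' heq
      simp only [Finset.coe_filter, Set.mem_setOf_eq] at hy hy'
      by_contra hne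
      obtain ⟨j, hj, hd⟩ := hsep y hy.1 y' hy'.1 hne
      by_cases hjS : j ∈ S
      · have hnp_eq : np (T^[j] y) = np (T^[j] y') := by
          have := congrFun heq ⟨j, hjS⟩
          simpa [hphi, Subtype.ext_iff] using this
        have d1 := hdist (T^[j] y)
        have d2 := hdist (T^[j] y')
        have ht := dist_triangle (T^[j] y) (np (T^[j] y)) (T^[j] y')
        have d3 : dist (np (T^[j] y)) (T^[j] y') = dist (T^[j] y') (np (T^[j] y')) := by
          rw [hnp_eq]; exact dist_comm _ _
        linarith
      · have h1 : dist (T^[j] x₀) (T^[j] y) ≤ σ := by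
          by_contra h
          push_neg at h
          have : j ∈ Λ y := by simp [hΛ, Finset.mem_filter, Finset.mem_range, hj, h]
          rw [hy.2] at this; exact hjS this
        have h2 : dist (T^[j] x₀) (T^[j] y') ≤ σ := by
          by_contra h
          push_neg at h
          have : j ∈ Λ y' := by simp [hΛ, Finset.mem_filter, Finset.mem_range, hj, h]
          rw [hy'.2] at this; exact hjS this
        have := dist_triangle (T^[j] y) (T^[j] x₀) (T^[j] y')
        rw [dist_comm (T^[j] y) (T^[j] x₀)] at this
        linarith
    have hcard := Set.ncard_le_ncard_of_injOn phi (fun a ha => Set.mem_univ (phi a)) hinj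
      (Set.finite_univ)
    rw [Set.ncard_coe_finset, Set.ncard_univ] at hcard
    calc (F.filter (fun y => Λ y = S)).card ≤ Nat.card ({j // j ∈ S} → {x // x ∈ P}) := hcard
      _ = P.card ^ S.card := by
          rw [Nat.card_eq_fintype_card, Fintype.card_fun]
          simp [Fintype.card_coe]
      _ ≤ P.card ^ K := Nat.pow_le_pow_right hP1 hScard
  have hsum : F.card ≤ 𝒮.card * P.card ^ K := by
    rw [Finset.card_eq_sum_card_fiberwise hmaps]
    calc ∑ S ∈ 𝒮, (F.filter (fun y => Λ y = S)).card ≤ ∑ S ∈ 𝒮, P.card ^ K :=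
          Finset.sum_le_sum hfiber
      _ = 𝒮.card * P.card ^ K := by rw [Finset.sum_const, smul_eq_mul]
  have h𝒮card : (𝒮.card : ℝ) ≤ (K+1) * ((n:ℝ)^K / K !) := by
    have hsub : 𝒮 ⊆ (Finset.range (K+1)).biUnion (fun i => (Finset.range n).powersetCard i) := by
      intro S hS
      simp only [h𝒮, Finset.mem_filter, Finset.mem_powerset] at hS
      simp only [Finset.mem_biUnion, Finset.mem_range, Finset.mem_powersetCard]
      exact ⟨S.card, Nat.lt_succ_of_le hS.2, hS.1, rfl⟩
    have h1 : 𝒮.card ≤ ∑ i ∈ Finset.range (K+1), (n.choose i) := by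
      calc 𝒮.card ≤ ((Finset.range (K+1)).biUnion (fun i => (Finset.range n).powersetCard i)).card :=
            Finset.card_le_card hsub
        _ ≤ ∑ i ∈ Finset.range (K+1), ((Finset.range n).powersetCard i).card :=
            Finset.card_biUnion_le
        _ = ∑ i ∈ Finset.range (K+1), (n.choose i) := by
            simp [Finset.card_powersetCard]
    calc (𝒮.card : ℝ) ≤ ∑ i ∈ Finset.range (K+1), ((n.choose i : ℕ) : ℝ) := by
          exact_mod_cast h1
      _ ≤ ∑ i ∈ Finset.range (K+1), ((n:ℝ)^K / K !) := by
          refine Finset.sum_le_sum fun i hi => ?_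
          exact aux_choose_le n i K (Nat.lt_succ_iff.mp (Finset.mem_range.mp hi)) hKn
      _ = (K+1) * ((n:ℝ)^K / K !) := by
          rw [Finset.sum_const, Finset.card_range]
          push_cast; ring
  calc (F.card : ℝ) ≤ (𝒮.card : ℝ) * (P.card:ℝ) ^ K := by exact_mod_cast hsum
    _ ≤ (K+1) * ((n:ℝ)^K / K !) * (P.card:ℝ)^K := by
        apply mul_le_mul_of_nonneg_right h𝒮card (by positivity)


/-- if `T` has almost specification with mistake function `g` and constants
`k_g`, and `h_top(T) > 0`, then there exist `σ > 2δ > 0`, `N ≥ k_g(δ)` and points `x, y`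
that are `(2g; N, σ)`-separated. -/
theorem separated_of_entropy_positive {X : Type*} [MetricSpace X] [CompactSpace X]
    (T : X → X) (hT : Continuous T) (ε₀ : ℝ) (g : ℕ → ℝ → ℕ)
    (hg : IsMistakeFunction ε₀ g)
    (kg : ℝ → ℕ) (hspec : AlmostSpecWith T g kg)
    (hpos : 0 < topEntropy T) :
    ∃ σ δ : ℝ, 0 < δ ∧ 2 * δ < σ ∧ ∃ N : ℕ, kg δ ≤ N ∧ ∃ x y : X,
      2 * g N σ < Set.ncard {j : ℕ | j < N ∧ σ < dist (T^[j] x) (T^[j] y)} := by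
  obtain ⟨hε₀, hmono, htd, hflat⟩ := hg
  classical
  rcases isEmpty_or_nonempty X with hemp | hne
  · exfalso
    have hzero : ∀ n : ℕ, ∀ ε' : ℝ, sepNum T n ε' = 0 := by
      intro n ε'
      have hset : {k : ℕ | ∃ F : Finset X,
          (∀ x ∈ F, ∀ y ∈ F, x ≠ y → ∃ j < n, ε' < dist (T^[j] x) (T^[j] y)) ∧ F.card = k}
          = {0} := by
        ext k
        constructor
        · rintro ⟨F, _, rfl⟩
          have : F = ∅ := Finset.eq_empty_of_isEmpty F
          simp [this]
        · rintro rfl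
          exact ⟨∅, by simp⟩
      show sSup _ = 0
      rw [hset, csSup_singleton]
    rw [topEntropy] at hpos
    simp only [hzero, Nat.cast_zero, Real.log_zero, zero_div, EReal.coe_zero,
      Filter.limsup_const, iSup_const] at hpos
    exact lt_irrefl _ hpos
  obtain ⟨ε, hL⟩ := lt_iSup_iff.mp hpos
  obtain ⟨c', hc'0, hc'L⟩ := exists_between hL
  have hc'top : c' ≠ ⊤ := hc'L.ne_top
  have hc'bot : c' ≠ ⊥ := (lt_of_le_of_lt bot_le hc'0).ne' 
  set c : ℝ := c'.toReal with hcdef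
  have hcoe : (c : EReal) = c' := EReal.coe_toReal hc'top hc'bot
  have hc : 0 < c := by
    have := hc'0
    rw [← hcoe] at this
    exact_mod_cast this
  set e : ℝ := ε.1 with hedef
  have he : 0 < e := ε.2
  have hfreq : ∃ᶠ n in atTop, c < Real.log (sepNum T n e) / n := by
    have h := Filter.frequently_lt_of_lt_limsup (u := fun n : ℕ =>
      ((Real.log (sepNum T n e) / n : ℝ) : EReal)) (f := atTop) (by isBoundedDefault) hc'L
    refine h.mono fun n hn => ?_
    have hn' : (c : EReal) < ((Real.log (sepNum T n e) / n : ℝ) : EReal) := by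
      rw [hcoe]; exact hn
    exact_mod_cast hn'
  set σ : ℝ := min (e/3) (ε₀/2) with hσdef
  have hσ : 0 < σ := lt_min (by positivity) (by positivity)
  have hσe : 3 * σ ≤ e := by
    have := min_le_left (e/3) (ε₀/2)
    have h2 : σ ≤ e/3 := this
    linarith
  have hσε₀ : σ < ε₀ := lt_of_le_of_lt (min_le_right _ _) (by linarith)
  have htend := htd σ hσ hσε₀
  set q : ℕ → ℝ := fun n => ((2 * g n σ : ℕ) : ℝ) / n with hqdef
  have hq : Tendsto q atTop (nhds 0) := by
    have h2 : Tendsto (fun n : ℕ => 2 * ((g n σ : ℝ) / n)) atTop (nhds (2 * 0)) :=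
      htend.const_mul 2
    rw [mul_zero] at h2
    refine h2.congr fun n => ?_
    rw [hqdef]
    push_cast
    ring
  -- net
  obtain ⟨t, htfin, htcov⟩ := (Metric.totallyBounded_iff.mp
    ((isCompact_univ : IsCompact (Set.univ : Set X)).totallyBounded)) σ hσ
  have hnet : ∀ x : X, ∃ p, p ∈ htfin.toFinset ∧ dist x p < σ := by
    intro x
    have hx := htcov (Set.mem_univ x)
    rcases Set.mem_iUnion₂.mp hx with ⟨y, hy, hxy⟩
    exact ⟨y, htfin.mem_toFinset.mpr hy, by rwa [Metric.mem_ball] at hxy⟩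
  set P : Finset X := htfin.toFinset with hPdef
  choose np hnpP hnpd using hnet
  have hP1 : 1 ≤ P.card := Finset.card_pos.mpr ⟨np (Classical.arbitrary X), hnpP _⟩
  set lp : ℝ := Real.log (P.card) with hlpdef
  have hlp : 0 ≤ lp := Real.log_nonneg (by exact_mod_cast hP1)
  set W : ℕ → ℝ := fun n => 2 * q n + Real.negMulLog (q n) + q n * lp with hWdef
  have hW : Tendsto W atTop (nhds 0) := by
    have h1 : Tendsto (fun n => 2 * q n) atTop (nhds (2 * 0)) := hq.const_mul 2
    have h2 : Tendsto (fun n => Real.negMulLog (q n)) atTop (nhds (Real.negMulLog 0)) :=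
      (Real.continuous_negMulLog.tendsto 0).comp hq
    have h3 : Tendsto (fun n => q n * lp) atTop (nhds (0 * lp)) := hq.mul_const lp
    have := (h1.add h2).add h3
    simpa using this
  have hEv : ∀ᶠ n in atTop, W n < c ∧ q n < 1/2 ∧ max 1 (kg (σ/3)) ≤ n :=
    (hW.eventually_lt_const hc).and ((hq.eventually_lt_const (by norm_num : (0:ℝ) < 1/2)).and
      (eventually_ge_atTop _))
  obtain ⟨N, hNf, hWN, hqN, hNge⟩ := (hfreq.and_eventually hEv).exists
  have h1N : 1 ≤ N := le_trans (le_max_left _ _) hNge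
  have hkgN : kg (σ/3) ≤ N := le_trans (le_max_right _ _) hNge
  have hN0 : (0:ℝ) < N := by exact_mod_cast h1N
  set K : ℕ := 2 * g N σ with hKdef
  have hKN : K ≤ N := by
    have hq' : ((K:ℕ):ℝ) / N < 1/2 := hqN
    have : (K:ℝ) < N / 2 := by
      rw [div_lt_iff₀ hN0] at hq'
      linarith
    have : (K:ℝ) ≤ (N:ℝ) := by linarith
    exact_mod_cast this
  have hcN : c * N < Real.log (sepNum T N e) := by
    rw [lt_div_iff₀ hN0] at hNf
    exact hNf
  set S : ℕ := sepNum T N e with hSdef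
  have hS1 : 1 < S := by
    by_contra h
    push_neg at h
    have h1 : (S:ℝ) ≤ 1 := by exact_mod_cast h
    have h2 : Real.log S ≤ 0 := Real.log_nonpos (by positivity) h1
    nlinarith
  have hS0 : (0:ℝ) < S := by
    have : (1:ℝ) < S := by exact_mod_cast hS1
    linarith
  -- extract a maximal separated set
  set 𝒦 : Set ℕ := {k : ℕ | ∃ F : Finset X,
    (∀ x ∈ F, ∀ y ∈ F, x ≠ y → ∃ j < N, e < dist (T^[j] x) (T^[j] y)) ∧ F.card = k} with h𝒦def
  have hSsup : S = sSup 𝒦 := rfl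
  have h𝒦ne : 𝒦.Nonempty := ⟨0, ∅, by simp⟩
  have h𝒦bdd : BddAbove 𝒦 := by
    by_contra h
    have h1 : sSup 𝒦 = sSup (∅ : Set ℕ) := csSup_of_not_bddAbove h
    rw [csSup_empty] at h1
    rw [hSsup, h1] at hS1
    simp at hS1
  obtain ⟨F, hFsep, hFcard⟩ := Nat.sSup_mem h𝒦ne h𝒦bdd
  refine ⟨σ, σ/3, by linarith, by linarith, N, hkgN, ?_⟩
  by_contra hcon
  push_neg at hcon
  have hsep3 : ∀ x ∈ F, ∀ y ∈ F, x ≠ y → ∃ j < N, 3*σ < dist (T^[j] x) (T^[j] y) := by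
    intro x hx y hy hxy
    obtain ⟨j, hj, hd⟩ := hFsep x hx y hy hxy
    exact ⟨j, hj, lt_of_le_of_lt hσe hd⟩
  have hcount := count_lemma T N K σ hσ P np hnpP hnpd F hsep3 hcon hKN
  -- now the log estimate
  set k : ℝ := (K : ℝ) with hkdef
  set nn : ℝ := (N : ℝ) with hnndef
  have hk0 : (0:ℝ) ≤ k := Nat.cast_nonneg K
  have hfac : (0:ℝ) < ((K ! : ℕ) : ℝ) := by exact_mod_cast Nat.factorial_pos K
  have hA : (0:ℝ) < (k + 1) := by linarith
  have hB : (0:ℝ) < (nn^K / (K ! : ℕ)) := by positivity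
  have hPc : (0:ℝ) < (P.card : ℝ) := by exact_mod_cast lt_of_lt_of_le zero_lt_one hP1
  have hC : (0:ℝ) < ((P.card : ℝ))^K := pow_pos hPc K
  have hqN' : q N = k / nn := rfl
  have hlog1 : Real.log (k+1) ≤ k := by
    have := Real.log_le_sub_one_of_pos hA
    linarith
  have hlog2 : Real.log (nn^K / (K ! : ℕ)) = K * Real.log nn - Real.log (K ! : ℕ) := by
    rw [Real.log_div (by positivity) (ne_of_gt hfac), Real.log_pow]
  have hlog3 : Real.log (((P.card : ℝ))^K) = k * lp := by
    rw [Real.log_pow, hlpdef]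
  have hfactlow := aux_log_factorial K
  have hnml := aux_negMulLog k nn hk0 hN0
  have hLHS : Real.log ((k+1) * (nn^K / (K ! : ℕ)) * ((P.card : ℝ))^K) ≤ nn * W N := by
    rw [Real.log_mul (by positivity) (ne_of_gt hC), Real.log_mul (ne_of_gt hA) (ne_of_gt hB),
      hlog2, hlog3]
    have hWmul : nn * W N = 2 * k + nn * Real.negMulLog (k / nn) + k * lp := by
      rw [hWdef]
      simp only [hqN']
      field_simp
    rw [hWmul]
    have : (K:ℝ) * Real.log nn - Real.log (K ! : ℕ) ≤ nn * Real.negMulLog (k / nn) + k := by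
      have h5 : (K:ℝ) * Real.log nn = k * Real.log nn := by rw [hkdef]
      rw [h5]
      linarith [hfactlow, hnml]
    linarith
  have hfin : (F.card : ℝ) < (S : ℝ) := by
    have hmul : nn * W N < nn * c := mul_lt_mul_of_pos_left hWN hN0
    have hstep1 : Real.log ((k+1) * (nn^K / (K ! : ℕ)) * ((P.card : ℝ))^K) < nn * c :=
      lt_of_le_of_lt hLHS hmul
    have hpos2 : (0:ℝ) < (k+1) * (nn^K / (K ! : ℕ)) * ((P.card : ℝ))^K :=
      mul_pos (mul_pos hA hB) hC
    have h6 : (k+1) * (nn^K / (K ! : ℕ)) * ((P.card : ℝ))^K < Real.exp (nn * c) :=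
      (Real.log_lt_iff_lt_exp hpos2).mp hstep1
    have hcN' : nn * c < Real.log S := by
      have : c * nn < Real.log S := hcN
      linarith [mul_comm nn c]
    have h7 : Real.exp (nn * c) < S := (Real.lt_log_iff_exp_lt hS0).mp hcN'
    linarith [hcount]
  rw [hFcard] at hfin
  exact lt_irrefl _ hfin
end

section
/- Let (X,d) be a compact metric space and T : X → X a continuous map, and let g be any mistake function. Then the topological entropy of T satisfies h_top(T) = lim_{ε→0} limsup_{n→∞} (1/n) log s_n(g;X,ε), where s_n(g;X,ε) is the maximal cardinality of a (g;n,ε)-separated subset of X. -/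
open Filter Set

section AuxLemmas


/-- finite ε-net in a compact metric space -/
lemma exists_net (X : Type*) [MetricSpace X] [CompactSpace X] (ε : ℝ) (hε : 0 < ε) :
    ∃ S : Finset X, ∀ x : X, ∃ s ∈ S, dist x s < ε := by
  have h := (isCompact_univ (X := X)).totallyBounded
  rw [Metric.totallyBounded_iff] at h
  obtain ⟨t, ht, hcov⟩ := h ε hε
  refine ⟨ht.toFinset, fun x => ?_⟩
  have := hcov (Set.mem_univ x)
  simp only [Set.mem_iUnion, Metric.mem_ball] at this
  obtain ⟨y, hy, hd⟩ := this
  exact ⟨y, by simpa using hy, hd⟩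

variable {X : Type*} [MetricSpace X] (T : X → X)

/-- cardinality bound for (n,ε)-separated sets, given an (ε/2)-net S -/
lemma sep_card_le {n : ℕ} {ε : ℝ} {S : Finset X}
    (hS : ∀ x : X, ∃ s ∈ S, dist x s < ε / 2) {F : Finset X}
    (hF : ∀ x ∈ F, ∀ y ∈ F, x ≠ y → ∃ j < n, ε < dist (T^[j] x) (T^[j] y)) :
    F.card ≤ S.card ^ n := by
  classical
  choose c hcS hcd using hS
  have : F.card ≤ (Finset.univ : Finset (Fin n → {s // s ∈ S})).card := by
    refine Finset.card_le_card_of_injOn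
      (fun x => fun j : Fin n => (⟨c (T^[j.1] x), hcS _⟩ : {s // s ∈ S}))
      (fun x _ => Finset.mem_univ _) ?_
    intro x hx y hy hxy
    by_contra hne
    obtain ⟨j, hj, hsep⟩ := hF x hx y hy hne
    have hj' : c (T^[j] x) = c (T^[j] y) := by
      have := congrFun hxy ⟨j, hj⟩
      exact Subtype.ext_iff.mp this
    have : dist (T^[j] x) (T^[j] y) < ε := by
      calc dist (T^[j] x) (T^[j] y) ≤ dist (T^[j] x) (c (T^[j] x)) + dist (c (T^[j] y)) (T^[j] y) := by
            rw [hj']; exact dist_triangle _ _ _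
        _ < ε / 2 + ε / 2 := by
            have h2 := hcd (T^[j] y); rw [dist_comm] at h2; exact add_lt_add (hcd _) h2
        _ = ε := by ring
    linarith
  simpa [Fintype.card_fun] using this


variable [CompactSpace X]

lemma sep_bdd {n : ℕ} {ε : ℝ} (hε : 0 < ε) :
    ∃ m : ℕ, ∀ F : Finset X,
      (∀ x ∈ F, ∀ y ∈ F, x ≠ y → ∃ j < n, ε < dist (T^[j] x) (T^[j] y)) → F.card ≤ m := by
  obtain ⟨S, hS⟩ := exists_net X (ε / 2) (by linarith)
  exact ⟨S.card ^ n, fun F hF => sep_card_le T hS hF⟩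

lemma gsep_is_sep {g : ℕ → ℝ → ℕ} {n : ℕ} {ε : ℝ} {x y : X}
    (h : g n ε < Set.ncard {j : ℕ | j < n ∧ ε < dist (T^[j] x) (T^[j] y)}) :
    ∃ j < n, ε < dist (T^[j] x) (T^[j] y) := by
  have : ({j : ℕ | j < n ∧ ε < dist (T^[j] x) (T^[j] y)}).Nonempty :=
    Set.nonempty_of_ncard_ne_zero (by omega)
  obtain ⟨j, hj1, hj2⟩ := this
  exact ⟨j, hj1, hj2⟩

lemma le_sepNum {n : ℕ} {ε : ℝ} (hε : 0 < ε) {F : Finset X}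
    (hF : ∀ x ∈ F, ∀ y ∈ F, x ≠ y → ∃ j < n, ε < dist (T^[j] x) (T^[j] y)) :
    F.card ≤ sepNum T n ε := by
  obtain ⟨m, hm⟩ := sep_bdd T (n := n) hε
  exact le_csSup ⟨m, fun k ⟨F', hF', hc⟩ => hc ▸ hm F' hF'⟩ ⟨F, hF, rfl⟩

lemma sepNum_le {n : ℕ} {ε : ℝ} {m : ℕ}
    (h : ∀ F : Finset X,
      (∀ x ∈ F, ∀ y ∈ F, x ≠ y → ∃ j < n, ε < dist (T^[j] x) (T^[j] y)) → F.card ≤ m) :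
    sepNum T n ε ≤ m :=
  csSup_le ⟨0, ⟨∅, by simp⟩⟩ (fun k ⟨F, hF, hc⟩ => hc ▸ h F hF)

lemma le_sepNumG {g : ℕ → ℝ → ℕ} {n : ℕ} {ε : ℝ} (hε : 0 < ε) {F : Finset X}
    (hF : ∀ x ∈ F, ∀ y ∈ F, x ≠ y →
      g n ε < Set.ncard {j : ℕ | j < n ∧ ε < dist (T^[j] x) (T^[j] y)}) :
    F.card ≤ sepNumG T g n ε := by
  obtain ⟨m, hm⟩ := sep_bdd T (n := n) hε
  refine le_csSup ⟨m, fun k ⟨F', hF', hc⟩ => hc ▸ hm F' ?_⟩ ⟨F, hF, rfl⟩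
  exact fun x hx y hy hne => gsep_is_sep T (hF' x hx y hy hne)

lemma sepNumG_le_sepNum {g : ℕ → ℝ → ℕ} {n : ℕ} {ε : ℝ} (hε : 0 < ε) :
    sepNumG T g n ε ≤ sepNum T n ε :=
  csSup_le ⟨0, ⟨∅, by simp⟩⟩ (fun k ⟨F, hF, hc⟩ => hc ▸
    le_sepNum T hε (fun x hx y hy hne => gsep_is_sep T (hF x hx y hy hne)))

lemma sepNum_mono {n : ℕ} {δ ε : ℝ} (hδ : 0 < δ) (hδε : δ ≤ ε) :
    sepNum T n ε ≤ sepNum T n δ :=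
  csSup_le ⟨0, ⟨∅, by simp⟩⟩ (fun k ⟨F, hF, hc⟩ => hc ▸
    le_sepNum T hδ (fun x hx y hy hne => by
      obtain ⟨j, hj, hd⟩ := hF x hx y hy hne
      exact ⟨j, hj, lt_of_le_of_lt hδε hd⟩))

lemma one_le_sepNumG [Nonempty X] {g : ℕ → ℝ → ℕ} {n : ℕ} {ε : ℝ} (hε : 0 < ε) :
    1 ≤ sepNumG T g n ε := by
  have := le_sepNumG T (g := g) (n := n) (ε := ε) hε (F := {Classical.arbitrary X})
    (by intro x hx y hy hne; simp only [Finset.mem_singleton] at hx hy; exact absurd (hx.trans hy.symm) hne)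
  simpa using this

open Finset in
/-- For fixed x and an (n,2δ)-separated set E, the number of y ∈ E that are NOT
(g;n,δ)-separated from x is at most P'.card * S.card ^ G. -/
lemma count_bound {n G : ℕ} {δ : ℝ} (hδ : 0 < δ) {S : Finset X}
    (hS : ∀ x : X, ∃ s ∈ S, dist x s < δ) (hS1 : 1 ≤ S.card)
    {E : Finset X}
    (hE : ∀ x ∈ E, ∀ y ∈ E, x ≠ y → ∃ j < n, 2 * δ < dist (T^[j] x) (T^[j] y))
    (x : X) :
    (E.filter (fun y => Set.ncard {j : ℕ | j < n ∧ δ < dist (T^[j] x) (T^[j] y)} ≤ G)).card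
      ≤ ((Finset.range n).powerset.filter (fun Λ => n - G ≤ Λ.card)).card * S.card ^ G := by
  classical
  choose c hcS hcd using hS
  set P' := (Finset.range n).powerset.filter (fun Λ => n - G ≤ Λ.card) with hP'
  set Y := E.filter (fun y => Set.ncard {j : ℕ | j < n ∧ δ < dist (T^[j] x) (T^[j] y)} ≤ G) with hY
  set Λmap : X → Finset ℕ := fun y => (Finset.range n).filter
    (fun j => dist (T^[j] x) (T^[j] y) ≤ δ) with hΛmap
  -- ncard = card of the complementary filter
  have hncard : ∀ y : X, Set.ncard {j : ℕ | j < n ∧ δ < dist (T^[j] x) (T^[j] y)}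
      = ((Finset.range n).filter (fun j => δ < dist (T^[j] x) (T^[j] y))).card := by
    intro y
    rw [← Set.ncard_coe_finset]
    congr 1
    ext j
    simp [Finset.mem_filter, Finset.mem_range]
  have hmem : ∀ y ∈ Y, Λmap y ∈ P' := by
    intro y hy
    simp only [hY, Finset.mem_filter] at hy
    obtain ⟨hyE, hcard⟩ := hy
    rw [hncard y] at hcard
    simp only [hP', Finset.mem_filter, Finset.mem_powerset]
    refine ⟨Finset.filter_subset _ _, ?_⟩
    have hsplit : (Λmap y).card + ((Finset.range n).filter
        (fun j => δ < dist (T^[j] x) (T^[j] y))).card = n := by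
      rw [hΛmap]
      have := Finset.card_filter_add_card_filter_not
        (s := Finset.range n) (p := fun j => dist (T^[j] x) (T^[j] y) ≤ δ)
      simp only [not_le] at this
      simpa using this
    omega
  have hsub : Y ⊆ P'.biUnion (fun Λ => Y.filter (fun y => Λmap y = Λ)) := by
    intro y hy
    exact Finset.mem_biUnion.mpr ⟨Λmap y, hmem y hy, Finset.mem_filter.mpr ⟨hy, rfl⟩⟩
  calc Y.card ≤ (P'.biUnion (fun Λ => Y.filter (fun y => Λmap y = Λ))).card :=
        Finset.card_le_card hsub
    _ ≤ ∑ Λ ∈ P', (Y.filter (fun y => Λmap y = Λ)).card := Finset.card_biUnion_le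
    _ ≤ ∑ _Λ ∈ P', S.card ^ G := by
        refine Finset.sum_le_sum (fun Λ hΛ => ?_)
        simp only [hP', Finset.mem_filter, Finset.mem_powerset] at hΛ
        obtain ⟨hΛsub, hΛcard⟩ := hΛ
        -- complement has card ≤ G
        have hcompl : (Finset.range n \ Λ).card ≤ G := by
          rw [Finset.card_sdiff_of_subset hΛsub, Finset.card_range]
          omega
        -- injection into functions
        have hinj : (Y.filter (fun y => Λmap y = Λ)).card
            ≤ Fintype.card ({j // j ∈ Finset.range n \ Λ} → {s // s ∈ S}) := by
          rw [← Finset.card_univ]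
          refine Finset.card_le_card_of_injOn
            (fun y => fun j => (⟨c (T^[j.1] y), hcS _⟩ : {s // s ∈ S}))
            (fun y _ => Finset.mem_univ _) ?_
          intro y hy z hz hyz
          simp only [Finset.coe_filter, Set.mem_setOf_eq] at hy hz
          obtain ⟨hyY, hyΛ⟩ := hy
          obtain ⟨hzY, hzΛ⟩ := hz
          simp only [hY, Finset.mem_filter] at hyY hzY
          by_contra hne
          obtain ⟨j, hj, hsep⟩ := hE y hyY.1 z hzY.1 hne
          by_cases hjΛ : j ∈ Λ
          · -- both trace x on Λ
            have h1 : dist (T^[j] x) (T^[j] y) ≤ δ := by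
              have := hyΛ ▸ hjΛ
              rw [← hyΛ] at hjΛ
              simpa [hΛmap] using (Finset.mem_filter.mp hjΛ).2
            have h2 : dist (T^[j] x) (T^[j] z) ≤ δ := by
              rw [← hzΛ] at hjΛ
              simpa [hΛmap] using (Finset.mem_filter.mp hjΛ).2
            have : dist (T^[j] y) (T^[j] z) ≤ 2 * δ := by
              calc dist (T^[j] y) (T^[j] z)
                  ≤ dist (T^[j] y) (T^[j] x) + dist (T^[j] x) (T^[j] z) := dist_triangle _ _ _
                _ ≤ δ + δ := add_le_add (by rwa [dist_comm] at h1) h2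
                _ = 2 * δ := by ring
            linarith
          · -- same net point on complement
            have hjmem : j ∈ Finset.range n \ Λ :=
              Finset.mem_sdiff.mpr ⟨Finset.mem_range.mpr hj, hjΛ⟩
            have := congrFun hyz ⟨j, hjmem⟩
            have hceq : c (T^[j] y) = c (T^[j] z) := Subtype.ext_iff.mp this
            have : dist (T^[j] y) (T^[j] z) < 2 * δ := by
              calc dist (T^[j] y) (T^[j] z)
                  ≤ dist (T^[j] y) (c (T^[j] y)) + dist (c (T^[j] z)) (T^[j] z) := by
                    rw [hceq]; exact dist_triangle _ _ _
                _ < δ + δ := by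
                    have h2 := hcd (T^[j] z); rw [dist_comm] at h2
                    exact add_lt_add (hcd _) h2
                _ = 2 * δ := by ring
            linarith
        calc (Y.filter (fun y => Λmap y = Λ)).card
            ≤ Fintype.card ({j // j ∈ Finset.range n \ Λ} → {s // s ∈ S}) := hinj
          _ = S.card ^ (Finset.range n \ Λ).card := by
              rw [Fintype.card_fun]; simp
          _ ≤ S.card ^ G := Nat.pow_le_pow_right hS1 hcompl
    _ = P'.card * S.card ^ G := by rw [Finset.sum_const, smul_eq_mul]

/-- Greedy extraction: any (n,2δ)-separated set has cardinality ≤ sepNumG * M,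
where M bounds the per-point non-separated count. -/
lemma greedy {g : ℕ → ℝ → ℕ} {n : ℕ} {δ : ℝ} (hδ : 0 < δ) {M : ℕ}
    (hcount : ∀ E : Finset X,
      (∀ x ∈ E, ∀ y ∈ E, x ≠ y → ∃ j < n, 2 * δ < dist (T^[j] x) (T^[j] y)) →
      ∀ x : X,
        (E.filter (fun y =>
          Set.ncard {j : ℕ | j < n ∧ δ < dist (T^[j] x) (T^[j] y)} ≤ g n δ)).card ≤ M) :
    ∀ E : Finset X,
      (∀ x ∈ E, ∀ y ∈ E, x ≠ y → ∃ j < n, 2 * δ < dist (T^[j] x) (T^[j] y)) →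
      E.card ≤ sepNumG T g n δ * M := by
  classical
  -- first: extract a g-separated subset F with E.card ≤ F.card * M
  suffices h : ∀ E : Finset X,
      (∀ x ∈ E, ∀ y ∈ E, x ≠ y → ∃ j < n, 2 * δ < dist (T^[j] x) (T^[j] y)) →
      ∃ F : Finset X, F ⊆ E ∧
        (∀ x ∈ F, ∀ y ∈ F, x ≠ y →
          g n δ < Set.ncard {j : ℕ | j < n ∧ δ < dist (T^[j] x) (T^[j] y)}) ∧
        E.card ≤ F.card * M by
    intro E hE
    obtain ⟨F, _, hFsep, hcard⟩ := h E hE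
    exact hcard.trans (Nat.mul_le_mul_right M (le_sepNumG T hδ hFsep))
  intro E
  induction E using Finset.strongInduction with
  | _ E ih =>
    intro hE
    rcases Finset.eq_empty_or_nonempty E with rfl | ⟨x, hx⟩
    · exact ⟨∅, by simp⟩
    · set Y := E.filter (fun y =>
        Set.ncard {j : ℕ | j < n ∧ δ < dist (T^[j] x) (T^[j] y)} ≤ g n δ) with hYdef
      have hxY : x ∈ Y := by
        simp only [hYdef, Finset.mem_filter]
        refine ⟨hx, ?_⟩
        have : {j : ℕ | j < n ∧ δ < dist (T^[j] x) (T^[j] x)} = ∅ := by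
          ext j; simp only [Set.mem_setOf_eq, dist_self, Set.mem_empty_iff_false, iff_false,
            not_and, not_lt]
          intro _; exact le_of_lt hδ
        rw [this, Set.ncard_empty]
        exact Nat.zero_le _
      have hYsub : Y ⊆ E := Finset.filter_subset _ _
      set E' := E \ Y with hE'def
      have hssub : E' ⊂ E := by
        refine Finset.ssubset_iff_of_subset (Finset.sdiff_subset) |>.mpr ?_
        exact ⟨x, hx, by simp [hE'def, hxY]⟩
      obtain ⟨F', hF'sub, hF'sep, hF'card⟩ := ih E' hssub
        (fun a ha b hb => hE a (Finset.mem_sdiff.mp ha).1 b (Finset.mem_sdiff.mp hb).1)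
      have hxF' : x ∉ F' := fun h => by
        have := hF'sub h
        rw [hE'def, Finset.mem_sdiff] at this
        exact this.2 hxY
      refine ⟨insert x F', ?_, ?_, ?_⟩
      · exact Finset.insert_subset hx (hF'sub.trans Finset.sdiff_subset)
      · intro a ha b hb hab
        rcases Finset.mem_insert.mp ha with rfl | haF
        · rcases Finset.mem_insert.mp hb with rfl | hbF
          · exact absurd rfl hab
          · have hbE' := hF'sub hbF
            rw [hE'def, Finset.mem_sdiff] at hbE'
            have : ¬ (Set.ncard {j : ℕ | j < n ∧ δ < dist (T^[j] a) (T^[j] b)} ≤ g n δ) := by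
              intro hle
              exact hbE'.2 (Finset.mem_filter.mpr ⟨hbE'.1, hle⟩)
            omega
        · rcases Finset.mem_insert.mp hb with rfl | hbF
          · have haE' := hF'sub haF
            rw [hE'def, Finset.mem_sdiff] at haE'
            have hsymm : {j : ℕ | j < n ∧ δ < dist (T^[j] a) (T^[j] b)}
                = {j : ℕ | j < n ∧ δ < dist (T^[j] b) (T^[j] a)} := by
              ext j; simp [dist_comm]
            have : ¬ (Set.ncard {j : ℕ | j < n ∧ δ < dist (T^[j] b) (T^[j] a)} ≤ g n δ) := by
              intro hle
              exact haE'.2 (Finset.mem_filter.mpr ⟨haE'.1, hle⟩)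
            rw [hsymm]
            omega
          · exact hF'sep a haF b hbF hab
      · have hYM : Y.card ≤ M := hcount E hE x
        have hEcard : E.card ≤ E'.card + Y.card := by
          rw [hE'def, Finset.card_sdiff_of_subset hYsub]
          have := Finset.card_le_card hYsub
          omega
        have : (insert x F').card = F'.card + 1 := Finset.card_insert_of_notMem hxF'
        rw [this]
        calc E.card ≤ E'.card + Y.card := hEcard
          _ ≤ F'.card * M + M := add_le_add hF'card hYM
          _ = (F'.card + 1) * M := by ring

lemma Pcard_le (n G : ℕ) :
    ((Finset.range n).powerset.filter (fun Λ => n - G ≤ Λ.card)).card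
      ≤ ∑ k ∈ Finset.range (G + 1), n.choose k := by
  classical
  have h1 : ((Finset.range n).powerset.filter (fun Λ => n - G ≤ Λ.card)).card
      ≤ ((Finset.range n).powerset.filter (fun Λ => Λ.card ≤ G)).card := by
    refine Finset.card_le_card_of_injOn (fun Λ => Finset.range n \ Λ) ?_ ?_
    · intro Λ hΛ
      simp only [Finset.mem_coe, Finset.mem_filter, Finset.mem_powerset] at hΛ ⊢
      refine ⟨Finset.sdiff_subset, ?_⟩
      rw [Finset.card_sdiff_of_subset hΛ.1, Finset.card_range]
      omega
    · intro Λ hΛ Λ' hΛ' h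
      simp only [Finset.coe_filter, Set.mem_setOf_eq, Finset.mem_powerset] at hΛ hΛ'
      have := congrArg (fun s => Finset.range n \ s) h
      simpa [Finset.sdiff_sdiff_eq_self hΛ.1, Finset.sdiff_sdiff_eq_self hΛ'.1] using this
  have h2 : ((Finset.range n).powerset.filter (fun Λ => Λ.card ≤ G))
      = (Finset.range (G + 1)).biUnion (fun k => (Finset.range n).powersetCard k) := by
    ext Λ
    simp only [Finset.mem_filter, Finset.mem_powerset, Finset.mem_biUnion, Finset.mem_range,
      Finset.mem_powersetCard]
    constructor
    · rintro ⟨hsub, hle⟩; exact ⟨Λ.card, by omega, hsub, rfl⟩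
    · rintro ⟨k, hk, hsub, hcard⟩; exact ⟨hsub, by omega⟩
  calc _ ≤ _ := h1
    _ = _ := by rw [h2]
    _ ≤ ∑ k ∈ Finset.range (G + 1), ((Finset.range n).powersetCard k).card :=
        Finset.card_biUnion_le
    _ = ∑ k ∈ Finset.range (G + 1), n.choose k := by
        refine Finset.sum_congr rfl (fun k _ => ?_)
        rw [Finset.card_powersetCard, Finset.card_range]

lemma binom_sum_bound (n G : ℕ) {a : ℝ} (ha : 0 < a) (ha1 : a ≤ 1) :
    (∑ k ∈ Finset.range (G + 1), (n.choose k : ℝ)) * a ^ G ≤ (1 + a) ^ n := by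
  have step1 : (∑ k ∈ Finset.range (G + 1), (n.choose k : ℝ)) * a ^ G
      ≤ ∑ k ∈ Finset.range (G + 1), (n.choose k : ℝ) * a ^ k := by
    rw [Finset.sum_mul]
    refine Finset.sum_le_sum (fun k hk => ?_)
    have hk' : k ≤ G := by simpa [Nat.lt_succ_iff] using Finset.mem_range.mp hk
    exact mul_le_mul_of_nonneg_left (pow_le_pow_of_le_one ha.le ha1 hk') (by positivity)
  have step2 : ∑ k ∈ Finset.range (G + 1), (n.choose k : ℝ) * a ^ k
      ≤ ∑ k ∈ Finset.range (n + G + 1), (n.choose k : ℝ) * a ^ k := by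
    refine Finset.sum_le_sum_of_subset_of_nonneg
      (Finset.range_subset_range.mpr (by omega)) (fun k _ _ => by positivity)
  have step3 : ∑ k ∈ Finset.range (n + G + 1), (n.choose k : ℝ) * a ^ k
      = ∑ k ∈ Finset.range (n + 1), (n.choose k : ℝ) * a ^ k := by
    symm
    refine Finset.sum_subset (Finset.range_subset_range.mpr (by omega)) ?_
    intro k _ hk
    have : n < k := by simpa [Nat.lt_succ_iff] using Finset.mem_range.not.mp hk
    simp [Nat.choose_eq_zero_of_lt this]
  have step4 : ∑ k ∈ Finset.range (n + 1), (n.choose k : ℝ) * a ^ k = (1 + a) ^ n := by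
    rw [add_comm (1 : ℝ) a, add_pow]
    refine Finset.sum_congr rfl (fun k _ => ?_)
    rw [one_pow]; ring
  linarith

lemma log_M_bound (n G C : ℕ) (hC : 1 ≤ C) {a : ℝ} (ha : 0 < a) (ha1 : a ≤ 1) :
    Real.log ((((Finset.range n).powerset.filter (fun Λ => n - G ≤ Λ.card)).card * C ^ G : ℕ))
      ≤ n * Real.log (1 + a) + G * (Real.log C - Real.log a) := by
  set P := ((Finset.range n).powerset.filter (fun Λ => n - G ≤ Λ.card)).card with hP
  have hP1 : 1 ≤ P := by
    rw [hP, Nat.one_le_iff_ne_zero, ← Nat.pos_iff_ne_zero, Finset.card_pos]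
    exact ⟨Finset.range n, by simp⟩
  have hsum1 : (1 : ℝ) ≤ ∑ k ∈ Finset.range (G + 1), (n.choose k : ℝ) := by
    have : (P : ℝ) ≤ ∑ k ∈ Finset.range (G + 1), (n.choose k : ℝ) := by
      rw [← Nat.cast_sum]
      exact_mod_cast Pcard_le n G
    have : (1 : ℝ) ≤ (P : ℝ) := by exact_mod_cast hP1
    linarith [show (P : ℝ) ≤ ∑ k ∈ Finset.range (G + 1), (n.choose k : ℝ) from by
      rw [← Nat.cast_sum]; exact_mod_cast Pcard_le n G]
  have hPsum : (P : ℝ) ≤ ∑ k ∈ Finset.range (G + 1), (n.choose k : ℝ) := by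
    rw [← Nat.cast_sum]; exact_mod_cast Pcard_le n G
  have hlogsum : Real.log (∑ k ∈ Finset.range (G + 1), (n.choose k : ℝ))
      ≤ n * Real.log (1 + a) - G * Real.log a := by
    have hb := binom_sum_bound n G ha ha1
    have hsumpos : (0 : ℝ) < ∑ k ∈ Finset.range (G + 1), (n.choose k : ℝ) := by linarith
    have := Real.log_le_log (by positivity) hb
    rw [Real.log_mul (ne_of_gt hsumpos) (by positivity), Real.log_pow, Real.log_pow] at this
    linarith
  have hcast : ((P * C ^ G : ℕ) : ℝ) = (P : ℝ) * (C : ℝ) ^ G := by push_cast; ring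
  rw [hcast, Real.log_mul (by exact_mod_cast Nat.one_le_iff_ne_zero.mp hP1)
    (by positivity), Real.log_pow]
  have hlogP : Real.log (P : ℝ) ≤ Real.log (∑ k ∈ Finset.range (G + 1), (n.choose k : ℝ)) :=
    Real.log_le_log (by exact_mod_cast hP1) hPsum
  have : Real.log (P : ℝ) ≤ n * Real.log (1 + a) - G * Real.log a := le_trans hlogP hlogsum
  linarith

lemma eventually_log_M {δ : ℝ} {g : ℕ → ℝ → ℕ}
    (hgg : Filter.Tendsto (fun n : ℕ => (g n δ : ℝ) / n) Filter.atTop (nhds 0))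
    (C : ℕ) (hC : 1 ≤ C) {c : ℝ} (hc : 0 < c) :
    ∀ᶠ n : ℕ in Filter.atTop, Real.log ((((Finset.range n).powerset.filter
      (fun Λ => n - g n δ ≤ Λ.card)).card * C ^ g n δ : ℕ)) / n ≤ c := by
  set a : ℝ := min 1 (Real.exp (c / 2) - 1) with ha_def
  have hexp : (1 : ℝ) < Real.exp (c / 2) := by
    rw [← Real.exp_zero]; exact Real.exp_lt_exp.mpr (by linarith)
  have ha : 0 < a := lt_min one_pos (by linarith)
  have ha1 : a ≤ 1 := min_le_left _ _
  have hlog1a : Real.log (1 + a) ≤ c / 2 := by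
    have h1 : 1 + a ≤ Real.exp (c / 2) := by
      have := min_le_right 1 (Real.exp (c / 2) - 1)
      linarith
    calc Real.log (1 + a) ≤ Real.log (Real.exp (c / 2)) :=
          Real.log_le_log (by linarith) h1
      _ = c / 2 := Real.log_exp _
  set K : ℝ := Real.log C - Real.log a with hK_def
  have hK : 0 ≤ K := by
    have h1 : 0 ≤ Real.log C := Real.log_nonneg (by exact_mod_cast hC)
    have h2 : Real.log a ≤ 0 := Real.log_nonpos ha.le ha1
    simp only [hK_def]; linarith
  have hKpos : 0 < K + 1 := by linarith
  filter_upwards [hgg.eventually_lt_const (show (0:ℝ) < c / 2 / (K + 1) by positivity),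
    Filter.eventually_ge_atTop 1] with n hn hn1
  have npos : (0 : ℝ) < n := by exact_mod_cast hn1
  have hlog := log_M_bound n (g n δ) C hC ha ha1
  have hGn : (0 : ℝ) ≤ (g n δ : ℝ) / n := by positivity
  have hGK : ((g n δ : ℝ) / n) * K ≤ c / 2 := by
    have h1 : ((g n δ : ℝ) / n) * K ≤ (c / 2 / (K + 1)) * K :=
      mul_le_mul_of_nonneg_right hn.le hK
    have h2 : (c / 2 / (K + 1)) * (K + 1) = c / 2 := div_mul_cancel₀ _ (ne_of_gt hKpos)
    have h3 : (c / 2 / (K + 1)) * K ≤ (c / 2 / (K + 1)) * (K + 1) :=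
      mul_le_mul_of_nonneg_left (by linarith) (by positivity)
    linarith
  rw [div_le_iff₀ npos]
  calc Real.log ((((Finset.range n).powerset.filter
        (fun Λ => n - g n δ ≤ Λ.card)).card * C ^ g n δ : ℕ))
      ≤ n * Real.log (1 + a) + (g n δ) * K := hlog
    _ = (Real.log (1 + a) + ((g n δ : ℝ) / n) * K) * n := by field_simp
    _ ≤ (c / 2 + c / 2) * n := by
        refine mul_le_mul_of_nonneg_right (by linarith) npos.le
    _ = c * n := by ring

lemma ereal_le_of_forall_add {x y : EReal} (h : ∀ c : ℝ, 0 < c → x ≤ y + (c : EReal)) :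
    x ≤ y := by
  induction y using EReal.rec with
  | top => exact le_top
  | bot =>
    have := h 1 one_pos
    simpa using this
  | coe r =>
    induction x using EReal.rec with
    | bot => exact bot_le
    | top =>
      exfalso
      have := h 1 one_pos
      rw [← EReal.coe_add] at this
      exact absurd (this.trans_lt (EReal.coe_lt_top _)) (lt_irrefl _)
    | coe s =>
      rw [EReal.coe_le_coe_iff]
      by_contra hsr
      push_neg at hsr
      have := h ((s - r) / 2) (by linarith)
      rw [← EReal.coe_add, EReal.coe_le_coe_iff] at this
      linarith

end AuxLemmas

/-- for any mistake function `g`, the topological entropy equals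
`lim_{ε→0} limsup_n (1/n) log s_n(g; X, ε)` (the limit as `ε → 0⁺` being the supremum
over `ε > 0`, by monotonicity). -/
theorem topEntropy_eq_mistake_entropy {X : Type*} [MetricSpace X] [CompactSpace X]
    (T : X → X) (hT : Continuous T) (ε₀ : ℝ) (g : ℕ → ℝ → ℕ)
    (hg : IsMistakeFunction ε₀ g) :
    topEntropy T = ⨆ ε : {e : ℝ // 0 < e}, Filter.atTop.limsup
      (fun n : ℕ => ((Real.log (sepNumG T g n ε.1) / n : ℝ) : EReal)) := by
  classical
  rcases isEmpty_or_nonempty X with hX | hX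
  · -- empty space: the two quantities coincide trivially
    have hEq : ∀ (n : ℕ) (e : ℝ), sepNum T n e = sepNumG T g n e := by
      intro n e
      unfold sepNum sepNumG
      congr 1
      ext k
      constructor
      · rintro ⟨F, _, hc⟩
        exact ⟨F, fun x hx => (IsEmpty.false x).elim, hc⟩
      · rintro ⟨F, _, hc⟩
        exact ⟨F, fun x hx => (IsEmpty.false x).elim, hc⟩
    simp only [topEntropy]
    simp_rw [hEq]
  · have hε₀ : 0 < ε₀ := hg.1
    refine le_antisymm ?_ ?_
    · -- hard direction: topEntropy ≤ mistake entropy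
      rw [topEntropy]
      refine iSup_le ?_
      rintro ⟨ε, hε⟩
      set δ : ℝ := min ε ε₀ / 2 with hδdef
      have hmin : 0 < min ε ε₀ := lt_min hε hε₀
      have hδ : 0 < δ := by rw [hδdef]; linarith
      have hδε₀ : δ < ε₀ := by
        have := min_le_right ε ε₀
        rw [hδdef]; linarith
      have h2δ : 2 * δ ≤ ε := by
        have := min_le_left ε ε₀
        rw [hδdef]; linarith
      refine le_trans ?_ (le_iSup (fun (e : {e : ℝ // 0 < e}) => Filter.atTop.limsup
        (fun n : ℕ => ((Real.log (sepNumG T g n e.1) / n : ℝ) : EReal))) ⟨δ, hδ⟩)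
      obtain ⟨S, hS⟩ := exists_net X δ hδ
      have hS1 : 1 ≤ S.card := by
        obtain ⟨s, hsS, _⟩ := hS (Classical.arbitrary X)
        exact Finset.card_pos.mpr ⟨s, hsS⟩
      apply ereal_le_of_forall_add
      intro c hc
      -- the per-n counting estimate
      have key : ∀ n : ℕ, sepNum T n ε ≤ sepNumG T g n δ *
          (((Finset.range n).powerset.filter (fun Λ => n - g n δ ≤ Λ.card)).card
            * S.card ^ g n δ) := by
        intro n
        have step1 : sepNum T n ε ≤ sepNum T n (2 * δ) :=
          sepNum_mono T (by linarith) h2δ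
        have step2 : sepNum T n (2 * δ) ≤ sepNumG T g n δ *
            (((Finset.range n).powerset.filter (fun Λ => n - g n δ ≤ Λ.card)).card
              * S.card ^ g n δ) :=
          sepNum_le T (greedy T hδ (fun E hE x => count_bound T hδ hS hS1 hE x))
        exact step1.trans step2
      have hP1 : ∀ n : ℕ,
          1 ≤ ((Finset.range n).powerset.filter (fun Λ => n - g n δ ≤ Λ.card)).card := by
        intro n
        rw [Nat.one_le_iff_ne_zero, ← Nat.pos_iff_ne_zero, Finset.card_pos]
        exact ⟨Finset.range n, by simp⟩
      have hM1 : ∀ n : ℕ, 1 ≤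
          (((Finset.range n).powerset.filter (fun Λ => n - g n δ ≤ Λ.card)).card
            * S.card ^ g n δ) := by
        intro n
        calc 1 = 1 * 1 := (one_mul 1).symm
          _ ≤ _ := Nat.mul_le_mul (hP1 n) (Nat.one_le_pow _ _ (by omega))
      have hG1 : ∀ n : ℕ, 1 ≤ sepNumG T g n δ := fun n => one_le_sepNumG T hδ
      -- pointwise log inequality
      have hlogkey : ∀ n : ℕ, Real.log (sepNum T n ε) ≤ Real.log (sepNumG T g n δ)
          + Real.log ((((Finset.range n).powerset.filter
            (fun Λ => n - g n δ ≤ Λ.card)).card * S.card ^ g n δ : ℕ)) := by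
        intro n
        have hGpos : (0 : ℝ) < (sepNumG T g n δ : ℝ) := by exact_mod_cast hG1 n
        have hMpos : (0 : ℝ) < ((((Finset.range n).powerset.filter
            (fun Λ => n - g n δ ≤ Λ.card)).card * S.card ^ g n δ : ℕ) : ℝ) := by
          exact_mod_cast hM1 n
        by_cases h0 : sepNum T n ε = 0
        · rw [h0]
          simp only [Nat.cast_zero, Real.log_zero]
          have h1 : 0 ≤ Real.log (sepNumG T g n δ) :=
            Real.log_nonneg (by exact_mod_cast hG1 n)
          have h2 : 0 ≤ Real.log ((((Finset.range n).powerset.filter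
              (fun Λ => n - g n δ ≤ Λ.card)).card * S.card ^ g n δ : ℕ)) :=
            Real.log_nonneg (by exact_mod_cast hM1 n)
          linarith
        · have h1 : (1 : ℝ) ≤ (sepNum T n ε : ℝ) := by
            exact_mod_cast Nat.one_le_iff_ne_zero.mpr h0
          calc Real.log (sepNum T n ε)
              ≤ Real.log ((sepNumG T g n δ *
                  (((Finset.range n).powerset.filter (fun Λ => n - g n δ ≤ Λ.card)).card
                    * S.card ^ g n δ) : ℕ)) := by
                refine Real.log_le_log (by linarith) ?_
                exact_mod_cast key n
            _ = _ := by
                rw [Nat.cast_mul, Real.log_mul (ne_of_gt hGpos) (ne_of_gt hMpos)]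
      -- eventual bound on the combinatorial factor
      have hev := eventually_log_M (hg.2.2.1 δ hδ hδε₀) S.card hS1 hc
      have hevle : (fun n : ℕ => ((Real.log (sepNum T n ε) / n : ℝ) : EReal)) ≤ᶠ[Filter.atTop]
          (fun n : ℕ => ((Real.log (sepNumG T g n δ) / n + c : ℝ) : EReal)) := by
        filter_upwards [hev, Filter.eventually_ge_atTop 1] with n hn hn1
        rw [EReal.coe_le_coe_iff]
        have npos : (0 : ℝ) < n := by exact_mod_cast hn1
        have hdiv : Real.log (sepNum T n ε) / n ≤
            (Real.log (sepNumG T g n δ)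
              + Real.log ((((Finset.range n).powerset.filter
                (fun Λ => n - g n δ ≤ Λ.card)).card * S.card ^ g n δ : ℕ))) / n := by
          gcongr
          exact hlogkey n
        rw [add_div] at hdiv
        linarith
      calc Filter.atTop.limsup (fun n : ℕ => ((Real.log (sepNum T n ε) / n : ℝ) : EReal))
          ≤ Filter.atTop.limsup
              (fun n : ℕ => ((Real.log (sepNumG T g n δ) / n + c : ℝ) : EReal)) :=
            Filter.limsup_le_limsup hevle
        _ = Filter.atTop.limsup
              ((fun n : ℕ => ((Real.log (sepNumG T g n δ) / n : ℝ) : EReal))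
                + (fun _ : ℕ => (c : EReal))) := by
            have hfe : (fun n : ℕ => ((Real.log (sepNumG T g n δ) / n + c : ℝ) : EReal))
                = ((fun n : ℕ => ((Real.log (sepNumG T g n δ) / n : ℝ) : EReal))
                  + (fun _ : ℕ => (c : EReal))) := by
              funext n
              exact EReal.coe_add _ _
            rw [hfe]
        _ ≤ Filter.atTop.limsup
              (fun n : ℕ => ((Real.log (sepNumG T g n δ) / n : ℝ) : EReal))
            + Filter.atTop.limsup (fun _ : ℕ => (c : EReal)) := by
            refine EReal.limsup_add_le (Or.inr ?_) (Or.inr ?_)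
            · rw [Filter.limsup_const]; exact EReal.coe_ne_top c
            · rw [Filter.limsup_const]; exact EReal.coe_ne_bot c
        _ = Filter.atTop.limsup
              (fun n : ℕ => ((Real.log (sepNumG T g n δ) / n : ℝ) : EReal)) + (c : EReal) := by
            rw [Filter.limsup_const]
    · -- easy direction: mistake entropy ≤ topEntropy
      refine iSup_le ?_
      rintro ⟨ε, hε⟩
      rw [topEntropy]
      refine le_trans ?_ (le_iSup (fun (e : {e : ℝ // 0 < e}) => Filter.atTop.limsup
        (fun n : ℕ => ((Real.log (sepNum T n e.1) / n : ℝ) : EReal))) ⟨ε, hε⟩)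
      refine Filter.limsup_le_limsup (Filter.Eventually.of_forall ?_)
      intro n
      rw [EReal.coe_le_coe_iff]
      have hle : sepNumG T g n ε ≤ sepNum T n ε := sepNumG_le_sepNum T hε
      have hG1 : 1 ≤ sepNumG T g n ε := one_le_sepNumG T hε
      have hlog : Real.log (sepNumG T g n ε) ≤ Real.log (sepNum T n ε) :=
        Real.log_le_log (by exact_mod_cast hG1) (by exact_mod_cast hle)
      rcases Nat.eq_zero_or_pos n with rfl | hn
      · simp
      · have npos : (0 : ℝ) < n := by exact_mod_cast hn
        gcongr
end
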